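/- For every integer d ≥ 1 and every ℓ = (ℓ₁, …, ℓ_d) ∈ ℤ^d with ℓ ≠ 0, setting c := Σ_{i=1}^{d} ℓ_i λ_i, as elements of ℚ(λ₁, …, λ_d)[t] one has P(t, λ) ≠ P(t + c, λ) and P(t, λ) ≠ −P(t + c, λ), where P(t + c, λ) denotes the polynomial obtained from P by substituting t + c for t. -/

import Mathlib

/-! The polynomial `P(t, λ)` is not equal to `±P(t + c, λ)` for
`c = ∑ᵢ ℓᵢ λᵢ` with `ℓ ∈ ℤ^d \ {0}`. -/

/-- The image of the indeterminate `λ_i` in the rational function field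
`ℚ(λ₁, …, λ_d)`. -/
noncomputable def lamVar (d : ℕ) (i : Fin d) : FractionRing (MvPolynomial (Fin d) ℚ) :=
  algebraMap (MvPolynomial (Fin d) ℚ) (FractionRing (MvPolynomial (Fin d) ℚ))
    (MvPolynomial.X i)

/-- The polynomial `P(t, λ) = ∏ᵢ (t + λᵢ) - 2 ∑ᵢ λᵢ ∏_{k ≠ i} (t + λₖ)` as an element of
`ℚ(λ₁, …, λ_d)[t]`. -/
noncomputable def PPoly (d : ℕ) : Polynomial (FractionRing (MvPolynomial (Fin d) ℚ)) :=
  (∏ i : Fin d, (Polynomial.X + Polynomial.C (lamVar d i))) -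
    2 * ∑ i : Fin d, Polynomial.C (lamVar d i) *
      ∏ k ∈ Finset.univ.erase i, (Polynomial.X + Polynomial.C (lamVar d k))


section Helpers
open Polynomial Finset

variable {K : Type*} [Field K] {ι : Type*} [DecidableEq ι]

lemma coeff_prod_sub_one (s : Finset ι) (a : ι → K) (hs : s.Nonempty) :
    (∏ i ∈ s, (X + C (a i))).coeff (s.card - 1) = ∑ i ∈ s, a i := by
  rw [Finset.prod_X_add_C_coeff _ _ (Nat.sub_le _ _)]
  have h1 : s.card - (s.card - 1) = 1 := by
    have := Finset.card_pos.mpr hs; omega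
  rw [h1, Finset.powersetCard_one]
  simp

lemma coeff_prod_card (s : Finset ι) (a : ι → K) :
    (∏ i ∈ s, (X + C (a i))).coeff s.card = 1 := by
  rw [Finset.prod_X_add_C_coeff _ _ le_rfl]
  simp

lemma natDegree_prod_lin (s : Finset ι) (a : ι → K) :
    (∏ i ∈ s, (X + C (a i))).natDegree = s.card := by
  rw [Polynomial.natDegree_prod_of_monic _ _ fun i _ => monic_X_add_C _]
  simp

lemma coeff_Q (d : ℕ) (hd : 1 ≤ d) (a b : Fin d → K) :
    ((∏ i : Fin d, (X + C (a i))) - 2 * ∑ i : Fin d, C (b i) *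
      ∏ k ∈ Finset.univ.erase i, (X + C (a k))).coeff (d - 1)
    = (∑ i, a i) - 2 * ∑ i, b i := by
  have hne : (Finset.univ : Finset (Fin d)).Nonempty := by
    rw [Finset.univ_nonempty_iff]
    exact Fin.pos_iff_nonempty.mp hd
  rw [Polynomial.coeff_sub]
  have h1 : (∏ i : Fin d, (X + C (a i))).coeff (d - 1) = ∑ i, a i := by
    have h := coeff_prod_sub_one Finset.univ a hne
    simp only [Finset.card_univ, Fintype.card_fin] at h
    exact h
  rw [h1]
  congr 1
  rw [(map_ofNat (C : K →+* K[X]) 2).symm, Polynomial.coeff_C_mul,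
    Polynomial.finset_sum_coeff]
  have h2 : ∀ i : Fin d,
      (C (b i) * ∏ k ∈ Finset.univ.erase i, (X + C (a k))).coeff (d - 1) = b i := by
    intro i
    rw [Polynomial.coeff_C_mul]
    have hcard : (Finset.univ.erase i).card = d - 1 := by
      rw [Finset.card_erase_of_mem (Finset.mem_univ i)]; simp
    have := coeff_prod_card (Finset.univ.erase i) a
    rw [hcard] at this
    rw [this, mul_one]
  simp_rw [h2]

lemma monic_Q (d : ℕ) (hd : 1 ≤ d) (a b : Fin d → K) :
    ((∏ i : Fin d, (X + C (a i))) - 2 * ∑ i : Fin d, C (b i) *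
      ∏ k ∈ Finset.univ.erase i, (X + C (a k))).Monic := by
  have hM : (∏ i : Fin d, (X + C (a i))).Monic :=
    monic_prod_of_monic _ _ fun i _ => monic_X_add_C _
  refine hM.sub_of_left ?_
  have hdeg : (∏ i : Fin d, (X + C (a i))).degree = (d : WithBot ℕ) := by
    rw [Polynomial.degree_prod]
    simp [Polynomial.degree_X_add_C]
  rw [hdeg]
  calc (2 * ∑ i : Fin d, C (b i) * ∏ k ∈ Finset.univ.erase i, (X + C (a k))).degree
      ≤ (∑ i : Fin d, C (b i) * ∏ k ∈ Finset.univ.erase i, (X + C (a k))).degree := by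
        rw [(map_ofNat (C : K →+* K[X]) 2).symm]
        refine le_trans (Polynomial.degree_mul_le _ _) ?_
        calc (C (2:K)).degree + _ ≤ 0 + _ := add_le_add Polynomial.degree_C_le le_rfl
          _ = _ := zero_add _
    _ ≤ (d - 1 : ℕ) := by
        refine le_trans (Polynomial.degree_sum_le _ _) (Finset.sup_le fun i _ => ?_)
        refine le_trans (Polynomial.degree_mul_le _ _) ?_
        have hp : (∏ k ∈ Finset.univ.erase i, (X + C (a k))).degree ≤ ((d - 1 : ℕ) : WithBot ℕ) := by
          refine le_trans (Polynomial.degree_prod_le _ _) ?_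
          have hsum : ∑ k ∈ Finset.univ.erase i, (X + C (a k)).degree
              = ((Finset.univ.erase i).card : WithBot ℕ) := by
            rw [Finset.sum_congr rfl fun k _ => Polynomial.degree_X_add_C (a k)]
            simp
          rw [hsum, Finset.card_erase_of_mem (Finset.mem_univ i), Finset.card_univ,
            Fintype.card_fin]
        calc (C (b i)).degree + _ ≤ 0 + ((d - 1 : ℕ) : WithBot ℕ) :=
              add_le_add (Polynomial.degree_C_le) hp
          _ = ((d - 1 : ℕ) : WithBot ℕ) := zero_add _
    _ < (d : WithBot ℕ) := by
        rw [Nat.cast_lt]; omega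

lemma c_ne_zero (d : ℕ) (ℓ : Fin d → ℤ) (hℓ : ℓ ≠ 0) :
    (∑ i : Fin d, (ℓ i : FractionRing (MvPolynomial (Fin d) ℚ)) * lamVar d i) ≠ 0 := by
  intro h
  have key : (∑ i : Fin d, (ℓ i : MvPolynomial (Fin d) ℚ) * MvPolynomial.X i) = 0 := by
    apply IsFractionRing.injective (MvPolynomial (Fin d) ℚ)
      (FractionRing (MvPolynomial (Fin d) ℚ))
    rw [map_sum, map_zero]
    simpa [lamVar, map_intCast] using h
  obtain ⟨j, hj⟩ := Function.ne_iff.mp hℓ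
  apply hj
  have := congrArg (MvPolynomial.coeff (Finsupp.single j 1)) key
  simp only [MvPolynomial.coeff_sum, MvPolynomial.coeff_zero] at this
  have heval : ∀ i : Fin d,
      MvPolynomial.coeff (Finsupp.single j 1) ((ℓ i : MvPolynomial (Fin d) ℚ) * MvPolynomial.X i)
      = if i = j then (ℓ i : ℚ) else 0 := by
    intro i
    rw [show ((ℓ i : MvPolynomial (Fin d) ℚ)) = MvPolynomial.C ((ℓ i : ℚ)) from
      (map_intCast (MvPolynomial.C : ℚ →+* MvPolynomial (Fin d) ℚ) (ℓ i)).symm]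
    rw [MvPolynomial.coeff_C_mul, MvPolynomial.coeff_X']
    by_cases hij : i = j <;> simp [hij, Finsupp.single_left_inj]
  rw [Finset.sum_congr rfl fun i _ => heval i] at this
  simp only [Finset.sum_ite_eq', Finset.mem_univ, if_true] at this
  exact_mod_cast this

lemma PPoly_comp (d : ℕ) (c : FractionRing (MvPolynomial (Fin d) ℚ)) :
    (PPoly d).comp (X + C c) =
      (∏ i : Fin d, (X + C (c + lamVar d i))) -
        2 * ∑ i : Fin d, C (lamVar d i) *
          ∏ k ∈ Finset.univ.erase i, (X + C (c + lamVar d k)) := by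
  unfold PPoly
  simp only [Polynomial.sub_comp, Polynomial.mul_comp, Polynomial.prod_comp,
    Polynomial.sum_comp, Polynomial.add_comp, Polynomial.X_comp, Polynomial.C_comp,
    Polynomial.ofNat_comp, Polynomial.C_add]
  ring_nf

end Helpers

open Polynomial Finset

/-- For `ℓ ∈ ℤ^d` nonzero and `c = ∑ᵢ ℓᵢ λᵢ`, one has `P(t, λ) ≠ P(t + c, λ)` and
`P(t, λ) ≠ -P(t + c, λ)`. -/
theorem PPoly_ne_translated (d : ℕ) (hd : 1 ≤ d) (ℓ : Fin d → ℤ) (hℓ : ℓ ≠ 0) :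
    PPoly d ≠ (PPoly d).comp
      (Polynomial.X + Polynomial.C (∑ i : Fin d,
        (ℓ i : FractionRing (MvPolynomial (Fin d) ℚ)) * lamVar d i)) ∧
    PPoly d ≠ -((PPoly d).comp
      (Polynomial.X + Polynomial.C (∑ i : Fin d,
        (ℓ i : FractionRing (MvPolynomial (Fin d) ℚ)) * lamVar d i))) := by
  set K := FractionRing (MvPolynomial (Fin d) ℚ)
  set c : K := ∑ i : Fin d, (ℓ i : K) * lamVar d i with hc
  have hc0 : c ≠ 0 := c_ne_zero d ℓ hℓ
  have hm : (PPoly d).Monic := monic_Q d hd (lamVar d) (lamVar d)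
  have hq : (X + C c).natDegree ≠ 0 := by
    rw [Polynomial.natDegree_X_add_C]; exact one_ne_zero
  constructor
  · intro h
    have h1 := congrArg (fun p => p.coeff (d - 1)) h
    simp only [PPoly_comp] at h1
    rw [show PPoly d = _ from rfl] at h1
    have e1 : (PPoly d).coeff (d - 1) = (∑ i, lamVar d i) - 2 * ∑ i, lamVar d i :=
      coeff_Q d hd (lamVar d) (lamVar d)
    have e2 : ((∏ i : Fin d, (X + C (c + lamVar d i))) -
        2 * ∑ i : Fin d, C (lamVar d i) *
          ∏ k ∈ Finset.univ.erase i, (X + C (c + lamVar d k))).coeff (d - 1)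
        = (∑ i : Fin d, (c + lamVar d i)) - 2 * ∑ i, lamVar d i :=
      coeff_Q d hd (fun i => c + lamVar d i) (lamVar d)
    rw [e1, e2] at h1
    have h2 : (∑ i : Fin d, lamVar d i) = ∑ i : Fin d, (c + lamVar d i) := by
      have := sub_left_injective h1
      exact this
    rw [Finset.sum_add_distrib, Finset.sum_const, Finset.card_univ, Fintype.card_fin,
      right_eq_add] at h2
    rcases smul_eq_zero.mp h2 with h3 | h3
    · omega
    · exact hc0 h3
  · intro h
    have h1 := congrArg Polynomial.leadingCoeff h
    rw [Polynomial.leadingCoeff_neg, Polynomial.leadingCoeff_comp hq, hm.leadingCoeff,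
      (monic_X_add_C c).leadingCoeff] at h1
    norm_num at h1
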